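/- Let (X, G) be a CR-dynamical system. Then the set of all (3, n)-transitive points taken over all positive integers n, i.e. the set {x ∈ trans_3(G) \ trans_2(G) : ∃ n ∈ ℕ, ⋃_{k=0}^{n} G^k(x) = X}, is not dense in X. -/

import Mathlib

open Set Topology

variable {X : Type*}

/-- `GPow G n x` : the set of endpoints of `G`-paths of length `n` starting at `x`,
i.e. `G^n(x)`. -/
def GPow (G : Set (X × X)) (n : ℕ) (x : X) : Set X :=
  {y | ∃ p : ℕ → X, p 0 = x ∧ p n = y ∧ ∀ i < n, (p i, p (i + 1)) ∈ G}

/-- `u` is a trajectory of `x` in `(X, G)`. -/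
def IsTraj (G : Set (X × X)) (x : X) (u : ℕ → X) : Prop :=
  u 0 = x ∧ ∀ n : ℕ, (u n, u (n + 1)) ∈ G

/-- `x` is a legal point: it admits a trajectory. -/
def Legal (G : Set (X × X)) (x : X) : Prop := ∃ u : ℕ → X, IsTraj G x u

/-- The inverse relation `G⁻¹`. -/
def Ginv (G : Set (X × X)) : Set (X × X) := {p | (p.2, p.1) ∈ G}

/-- `T_G(x)* = ⋃ₙ G^n(x)`. -/
def TStar (G : Set (X × X)) (x : X) : Set X := ⋃ n : ℕ, GPow G n x

/-- The set of `0`-transitive points. -/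
def trans0 [TopologicalSpace X] (G : Set (X × X)) : Set X :=
  {x | Legal G x ∧ ∀ U : Set X, IsOpen U → U.Nonempty → ∃ n : ℕ, GPow G n x ⊆ U}

/-- The set of `1`-transitive points. -/
def trans1 [TopologicalSpace X] (G : Set (X × X)) : Set X :=
  {x | Legal G x ∧ ∀ u : ℕ → X, IsTraj G x u → Dense (Set.range u)}

/-- The set of `2`-transitive points. -/
def trans2 [TopologicalSpace X] (G : Set (X × X)) : Set X :=
  {x | ∃ u : ℕ → X, IsTraj G x u ∧ Dense (Set.range u)}

/-- The set of `3`-transitive points. -/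
def trans3 [TopologicalSpace X] (G : Set (X × X)) : Set X :=
  {x | Legal G x ∧ Dense (⋃ u ∈ {u : ℕ → X | IsTraj G x u}, Set.range u)}

/-- Concatenation of two paths. -/
def pcat (m : ℕ) (p q : ℕ → X) : ℕ → X := fun i => if i < m then p i else q (i - m)

lemma pcat_path {G : Set (X × X)} {p q : ℕ → X} {m k : ℕ} {a b c : X}
    (hp0 : p 0 = a) (hpm : p m = b) (hps : ∀ i < m, (p i, p (i + 1)) ∈ G)
    (hq0 : q 0 = b) (hqk : q k = c) (hqs : ∀ i < k, (q i, q (i + 1)) ∈ G) :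
    pcat m p q 0 = a ∧ pcat m p q (m + k) = c ∧
      ∀ i < m + k, (pcat m p q i, pcat m p q (i + 1)) ∈ G := by
  refine ⟨?_, ?_, ?_⟩
  · by_cases h : 0 < m
    · simp [pcat, h, hp0]
    · have hm : m = 0 := by omega
      simp [pcat, h, hq0, hm ▸ hpm, ← hp0, hm]
  · have h : ¬ m + k < m := by omega
    simp [pcat, h, hqk]
  · intro i hi
    by_cases h1 : i < m
    · by_cases h2 : i + 1 < m
      · simpa [pcat, h1, h2] using hps i h1
      · have h3 : i + 1 = m := by omega
        have : q (i + 1 - m) = p (i + 1) := by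
          rw [h3]; simp [hq0, ← hpm]
        rw [show pcat m p q (i + 1) = p (i + 1) by simp only [pcat, if_neg h2, this],
          show pcat m p q i = p i by simp only [pcat, if_pos h1]]
        exact hps i h1
    · have h2 : ¬ i + 1 < m := by omega
      have h3 : i + 1 - m = (i - m) + 1 := by omega
      have h4 : i - m < k := by omega
      simpa [pcat, h1, h2, h3] using hqs (i - m) h4

/-- Gluing countably many loops at `x` into an infinite trajectory. -/
lemma traj_of_segs {G : Set (X × X)} {x : X} (Seg : ℕ → ℕ → X) (L : ℕ → ℕ)
    (hL : ∀ j, 1 ≤ L j) (h0 : ∀ j, Seg j 0 = x) (hend : ∀ j, Seg j (L j) = x)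
    (hstep : ∀ j, ∀ i < L j, (Seg j i, Seg j (i + 1)) ∈ G) :
    ∃ u : ℕ → X, IsTraj G x u ∧ ∀ j, ∀ i < L j, Seg j i ∈ Set.range u := by
  classical
  set T : ℕ → ℕ := fun j => ∑ i ∈ Finset.range j, L i with hT
  have hTsucc : ∀ j, T (j + 1) = T j + L j := fun j => Finset.sum_range_succ L j
  have hT0 : T 0 = 0 := by simp [hT]
  have hTle : ∀ j, j ≤ T j := by
    intro j
    calc j = ∑ _i ∈ Finset.range j, 1 := by simp
    _ ≤ T j := Finset.sum_le_sum fun i _ => hL i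
  have hTmono : StrictMono T := strictMono_nat_of_lt_succ fun j => by
    have := hL j; rw [hTsucc]; omega
  set J : ℕ → ℕ := fun t => Nat.findGreatest (fun j => T j ≤ t) (t + 1) with hJ
  have hJ1 : ∀ t, T (J t) ≤ t := by
    intro t
    exact Nat.findGreatest_spec (P := fun j => T j ≤ t) (m := 0) (n := t + 1)
      (Nat.zero_le _) (by show T 0 ≤ t; rw [hT0]; exact Nat.zero_le _)
  have hJ2 : ∀ t, t < T (J t + 1) := by
    intro t
    by_contra h
    push_neg at h
    have hb : J t + 1 ≤ t + 1 := by have := hTle (J t + 1); omega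
    exact Nat.findGreatest_is_greatest (Nat.lt_succ_self _) hb h
  have hJuniq : ∀ j t, T j ≤ t → t < T (j + 1) → J t = j := by
    intro j t h1 h2
    have hju : j ≤ t := le_trans (hTle j) h1
    have h3 : j ≤ J t := Nat.le_findGreatest (by omega) h1
    have h4 : J t ≤ j := by
      by_contra h
      push_neg at h
      have h5 : T (j + 1) ≤ T (J t) := hTmono.monotone h
      have := hJ1 t
      omega
    omega
  refine ⟨fun t => Seg (J t) (t - T (J t)), ⟨?_, ?_⟩, ?_⟩
  · have hJ0 : J 0 = 0 := hJuniq 0 0 (by omega) (by rw [hTsucc]; have := hL 0; omega)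
    simp [hJ0, hT0, h0]
  · intro t
    have h1 := hJ1 t
    have h2 := hJ2 t
    have h2' := h2
    rw [hTsucc] at h2'
    have hi : t - T (J t) < L (J t) := by omega
    have hnext : Seg (J (t + 1)) (t + 1 - T (J (t + 1))) = Seg (J t) (t - T (J t) + 1) := by
      by_cases hc : t + 1 < T (J t + 1)
      · have hjj : J (t + 1) = J t := hJuniq (J t) (t + 1) (by omega) hc
        rw [hjj]
        congr 1
        omega
      · have heq : t + 1 = T (J t + 1) := by omega
        have hjj : J (t + 1) = J t + 1 :=
          hJuniq (J t + 1) (t + 1) (le_of_eq heq.symm)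
            (by rw [heq]; exact hTmono (Nat.lt_succ_self _))
        have heq' : t + 1 = T (J t) + L (J t) := heq.trans (hTsucc (J t))
        have hz : t + 1 - T (J (t + 1)) = 0 := by rw [hjj]; omega
        have hLj : t - T (J t) + 1 = L (J t) := by omega
        rw [hz, hjj, h0, hLj, hend]
    show (Seg (J t) (t - T (J t)), Seg (J (t + 1)) (t + 1 - T (J (t + 1)))) ∈ G
    rw [hnext]
    exact hstep (J t) (t - T (J t)) hi
  · intro j i hi
    refine ⟨T j + i, ?_⟩
    have hjj : J (T j + i) = j :=
      hJuniq j (T j + i) (by omega) (by rw [hTsucc]; omega)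
    show Seg (J (T j + i)) (T j + i - T (J (T j + i))) = Seg j i
    rw [hjj]
    congr 1
    omega

/-- the set of `(3,n)`-transitive points (over all positive `n`),
i.e. `{x ∈ trans₃(G) \ trans₂(G) : ∃ n, ⋃_{k ≤ n} G^k(x) = X}`, is not dense. -/
theorem stmt13 [MetricSpace X] [CompactSpace X]
    (G : Set (X × X)) (hGc : IsClosed G) (hGne : G.Nonempty) :
    ¬ Dense {x : X | x ∈ trans3 G \ trans2 G ∧
      ∃ n : ℕ, (⋃ k ≤ n, GPow G k x) = Set.univ} := by
  intro hS
  set S : Set X := {x : X | x ∈ trans3 G \ trans2 G ∧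
      ∃ n : ℕ, (⋃ k ≤ n, GPow G k x) = Set.univ} with hSdef
  obtain ⟨⟨ga, gb⟩, hg⟩ := hGne
  have hXne : Nonempty X := ⟨ga⟩
  obtain ⟨x, hx⟩ := hS.nonempty
  have hreach : ∀ y ∈ S, ∀ z : X, ∃ k, z ∈ GPow G k y := by
    intro y hy z
    obtain ⟨-, n, hn⟩ := hy
    have hz : z ∈ ⋃ k ≤ n, GPow G k y := hn ▸ Set.mem_univ z
    simp only [Set.mem_iUnion] at hz
    obtain ⟨kk, -, h⟩ := hz
    exact ⟨kk, h⟩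
  have hnot2 : x ∉ trans2 G := hx.1.2
  by_cases hsing : ∃ y ∈ S, y ≠ x
  · -- main case: there is a point of S different from x
    obtain ⟨ys, hysS, hysx⟩ := hsing
    obtain ⟨ks, hks⟩ := hreach x hx ys
    obtain ⟨ms, hms⟩ := hreach ys hysS x
    obtain ⟨r₁, hr₁0, hr₁k, hr₁s⟩ := hks
    obtain ⟨r₂, hr₂0, hr₂k, hr₂s⟩ := hms
    have hkspos : 1 ≤ ks := by
      rcases Nat.eq_zero_or_pos ks with h | h
      · exact absurd (by rw [← hr₁k, h, hr₁0]) hysx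
      · exact h
    -- the loop at x of positive length
    obtain ⟨hloop0, hloopend, hloops⟩ := pcat_path hr₁0 hr₁k hr₁s hr₂0 hr₂k hr₂s
    set loop : ℕ → X := pcat ks r₁ r₂ with hloopdef
    set ℓ : ℕ := ks + ms with hℓdef
    -- countable basis
    obtain ⟨B, hBc, hBemp, hBbasis⟩ := TopologicalSpace.exists_countable_basis X
    have hB'ne : {o ∈ B | o.Nonempty}.Nonempty := by
      obtain ⟨o, hoB, hxo, -⟩ :=
        hBbasis.exists_subset_of_mem_open (Set.mem_univ x) isOpen_univ
      exact ⟨o, hoB, ⟨x, hxo⟩⟩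
    obtain ⟨V, hV⟩ := (hBc.mono (Set.sep_subset _ _)).exists_eq_range hB'ne
    have hVmem : ∀ j, V j ∈ B ∧ (V j).Nonempty := by
      intro j
      have : V j ∈ {o ∈ B | o.Nonempty} := hV ▸ Set.mem_range_self j
      exact this
    have hchoice : ∀ j, ∃ z, z ∈ S ∧ z ∈ V j := fun j =>
      hS.exists_mem_open (hBbasis.isOpen (hVmem j).1) (hVmem j).2
    choose y hyS hyV using hchoice
    have h1 : ∀ j, ∃ kk, y j ∈ GPow G kk x := fun j => hreach x hx (y j)
    choose k hk using h1
    have h2 : ∀ j, ∃ mm, x ∈ GPow G mm (y j) := fun j => hreach (y j) (hyS j) x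
    choose m hm using h2
    choose p hp0 hpk hps using hk
    choose q hq0 hqm hqs using hm
    -- inner path: y j → x → x (through the loop), length m j + ℓ
    have hinner : ∀ j, pcat (m j) (q j) loop 0 = y j ∧
        pcat (m j) (q j) loop (m j + ℓ) = x ∧
        ∀ i < m j + ℓ, ((pcat (m j) (q j) loop) i, (pcat (m j) (q j) loop) (i + 1)) ∈ G :=
      fun j => pcat_path (hq0 j) (hqm j) (hqs j) hloop0 hloopend hloops
    -- segment j : x → y j → x → x, length k j + (m j + ℓ)
    have hsegj : ∀ j, pcat (k j) (p j) (pcat (m j) (q j) loop) 0 = x ∧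
        pcat (k j) (p j) (pcat (m j) (q j) loop) (k j + (m j + ℓ)) = x ∧
        ∀ i < k j + (m j + ℓ),
          ((pcat (k j) (p j) (pcat (m j) (q j) loop)) i,
           (pcat (k j) (p j) (pcat (m j) (q j) loop)) (i + 1)) ∈ G :=
      fun j => pcat_path (hp0 j) (hpk j) (hps j) (hinner j).1 (hinner j).2.1 (hinner j).2.2
    set Seg : ℕ → ℕ → X := fun j => pcat (k j) (p j) (pcat (m j) (q j) loop) with hSegdef
    set L : ℕ → ℕ := fun j => k j + (m j + ℓ) with hLdef
    have hLpos : ∀ j, 1 ≤ L j := fun j => by simp only [hLdef, hℓdef]; omega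
    obtain ⟨u, hu, hvisit⟩ := traj_of_segs Seg L hLpos
      (fun j => (hsegj j).1) (fun j => (hsegj j).2.1) (fun j => (hsegj j).2.2)
    -- Seg j (k j) = y j
    have hSegk : ∀ j, Seg j (k j) = y j := by
      intro j
      have h : ¬ k j < k j := lt_irrefl _
      show pcat (k j) (p j) (pcat (m j) (q j) loop) (k j) = y j
      rw [pcat, if_neg h, Nat.sub_self, pcat]
      by_cases hmj : 0 < m j
      · rw [if_pos hmj, hq0 j]
      · have hm0 : m j = 0 := by omega
        have hyx : y j = x := by rw [← hq0 j, ← hqm j, hm0]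
        rw [if_neg hmj, Nat.zero_sub, hloop0, hyx]
    have hdense : Dense (Set.range u) := by
      rw [hBbasis.dense_iff]
      intro o hoB hone
      have : o ∈ Set.range V := hV ▸ (show o ∈ {o ∈ B | o.Nonempty} from ⟨hoB, hone⟩)
      obtain ⟨j, hj⟩ := this
      have hkL : k j < L j := by simp only [hLdef, hℓdef]; omega
      have : Seg j (k j) ∈ Set.range u := hvisit j (k j) hkL
      rw [hSegk j] at this
      exact ⟨y j, hj ▸ hyV j, this⟩
    exact hnot2 ⟨u, hu, hdense⟩
  · -- degenerate case: S ⊆ {x}, so X = {x}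
    push_neg at hsing
    have hSsub : S ⊆ {x} := fun z hz => hsing z hz
    have hdx : Dense ({x} : Set X) := hS.mono hSsub
    have hXx : ∀ z : X, z = x := by
      intro z
      have : z ∈ closure ({x} : Set X) := hdx z
      simpa using this
    obtain ⟨u, hu⟩ := hx.1.1.1
    have : Dense (Set.range u) := by
      intro z
      rw [hXx z, ← hu.1]
      exact subset_closure ⟨0, rfl⟩
    exact hnot2 ⟨u, hu, this⟩
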